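/- Let Q be a real symmetric traceless 3×3 matrix and let |Q| denote its Frobenius norm (|Q|² = tr Q²). Then −(1/√6)|Q|³ ≤ tr Q³ ≤ (1/√6)|Q|³. -/

import Mathlib

noncomputable section
open MeasureTheory

abbrev E3 := EuclideanSpace ℝ (Fin 3)
abbrev Mat3 := Matrix (Fin 3) (Fin 3) ℝ

lemma key_ineq (a b c : ℝ) (h : a + b + c = 0) :
    6 * (a^3 + b^3 + c^3)^2 ≤ (a^2 + b^2 + c^2)^3 := by
  have hc : c = -a - b := by linarith
  subst hc
  nlinarith [sq_nonneg (a - b), sq_nonneg (a + 2*b), sq_nonneg (2*a + b),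
    sq_nonneg (a + b), sq_nonneg a, sq_nonneg b, sq_nonneg (a*b),
    sq_nonneg ((a - b)*(a + 2*b)*(2*a + b)), sq_nonneg (a^2 - b^2),
    sq_nonneg (a^2 + a*b + b^2)]

/-- For a real symmetric traceless 3×3 matrix `Q`,
`−(1/√6)|Q|³ ≤ tr Q³ ≤ (1/√6)|Q|³` where `|Q|² = tr Q²`. -/
theorem trace_cube_bound (Q : Mat3) (hsymm : Q.IsSymm) (htr : Q.trace = 0) :
    -(1 / Real.sqrt 6) * Real.sqrt ((Q * Q).trace) ^ 3 ≤ (Q * Q * Q).trace ∧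
      (Q * Q * Q).trace ≤ (1 / Real.sqrt 6) * Real.sqrt ((Q * Q).trace) ^ 3 := by
  have hherm : Q.IsHermitian := hsymm
  set U : Mat3 := (hherm.eigenvectorUnitary : Mat3) with hU
  set D : Mat3 := Matrix.diagonal (RCLike.ofReal ∘ hherm.eigenvalues) with hD
  have hspec : Q = U * D * star U := hherm.spectral_theorem
  have hUU : star U * U = 1 :=
    (Matrix.mem_unitaryGroup_iff').mp hherm.eigenvectorUnitary.2
  have htrD : ∀ M : Mat3, (U * M * star U).trace = M.trace := by
    intro M
    rw [Matrix.trace_mul_cycle, hUU, Matrix.one_mul]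
  set l : Fin 3 → ℝ := hherm.eigenvalues with hl
  have hDl : D = Matrix.diagonal l := by
    simp [hD, hl]
  have h1 : Q.trace = l 0 + l 1 + l 2 := by
    rw [hspec, htrD, hDl]
    simp [Matrix.trace_fin_three, Fin.sum_univ_three]
  have h2 : (Q * Q).trace = (l 0)^2 + (l 1)^2 + (l 2)^2 := by
    have : Q * Q = U * (D * D) * star U := by
      rw [hspec]
      calc U * D * star U * (U * D * star U)
          = U * (D * (star U * U) * D) * star U := by
            simp only [Matrix.mul_assoc]
        _ = U * (D * D) * star U := by rw [hUU]; simp [Matrix.mul_assoc]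
    rw [this, htrD, hDl, Matrix.diagonal_mul_diagonal]
    simp [Matrix.trace_fin_three]
    rw [Fin.sum_univ_three]
    ring
  have h3 : (Q * Q * Q).trace = (l 0)^3 + (l 1)^3 + (l 2)^3 := by
    have : Q * Q * Q = U * (D * D * D) * star U := by
      rw [hspec]
      calc U * D * star U * (U * D * star U) * (U * D * star U)
          = U * (D * (star U * U) * D * (star U * U) * D) * star U := by
            simp only [Matrix.mul_assoc]
        _ = U * (D * D * D) * star U := by rw [hUU]; simp [Matrix.mul_assoc]
    rw [this, htrD, hDl, Matrix.diagonal_mul_diagonal, Matrix.diagonal_mul_diagonal]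
    simp [Matrix.trace_fin_three]
    rw [Fin.sum_univ_three]
    ring
  have hsum0 : l 0 + l 1 + l 2 = 0 := by rw [← h1]; exact htr
  have hkey : 6 * ((Q * Q * Q).trace)^2 ≤ ((Q * Q).trace)^3 := by
    rw [h2, h3]; exact key_ineq _ _ _ hsum0
  have hs_nonneg : 0 ≤ (Q * Q).trace := by
    rw [h2]; positivity
  set s := (Q * Q).trace
  set t := (Q * Q * Q).trace
  have hr : Real.sqrt s ^ 2 = s := Real.sq_sqrt hs_nonneg
  have hr0 : 0 ≤ Real.sqrt s := Real.sqrt_nonneg s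
  have hu : Real.sqrt 6 ^ 2 = 6 := Real.sq_sqrt (by norm_num)
  have hu0 : 0 < Real.sqrt 6 := Real.sqrt_pos.mpr (by norm_num)
  have hsq : (Real.sqrt 6 * t)^2 ≤ (Real.sqrt s ^ 3)^2 := by
    have : (Real.sqrt s ^ 3)^2 = s^3 := by
      rw [← pow_mul, show 3 * 2 = 2 * 3 by ring, pow_mul, hr]
    rw [this, mul_pow, hu]
    linarith [hkey]
  have hr3 : 0 ≤ Real.sqrt s ^ 3 := by positivity
  have hb := abs_le_of_sq_le_sq' hsq hr3
  have e : (1 / Real.sqrt 6) * Real.sqrt s ^ 3 = Real.sqrt s ^ 3 / Real.sqrt 6 := by ring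
  constructor
  · have h1' : -(Real.sqrt s ^ 3) ≤ t * Real.sqrt 6 := by nlinarith [hb.1]
    have := (div_le_iff₀ hu0).mpr h1'
    have e2 : -(1 / Real.sqrt 6) * Real.sqrt s ^ 3 = -(Real.sqrt s ^ 3) / Real.sqrt 6 := by ring
    rw [e2, neg_div]
    linarith [this]
  · have h2' : t * Real.sqrt 6 ≤ Real.sqrt s ^ 3 := by nlinarith [hb.2]
    have := (le_div_iff₀ hu0).mpr h2'
    linarith [this, e.ge, e.le]
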